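/- Let X be a set, Y a nonempty subset of X, and S(Y) a subsemigroup of T(Y) that is a subgroup of Sym(Y). Then the semigroup T_{S(Y)}(X) = {f ∈ T(X) : f restricted/corestricted to Y lies in S(Y)} is a regular semigroup. -/
import Mathlib


open Set Function

/-- `S` is a subsemigroup of the full transformation semigroup on `A`
(closed under composition; composition order is irrelevant here since we
quantify over all ordered pairs). -/
def IsSubsemigroupOn {A : Type*} (S : Set (A → A)) : Prop :=
  ∀ a ∈ S, ∀ b ∈ S, a ∘ b ∈ S

/-- `S` is a subgroup of `Sym(A)`. -/
def IsSubgroupOfSym {A : Type*} (S : Set (A → A)) : Prop :=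
  IsSubsemigroupOn S ∧ (∀ a ∈ S, Function.Bijective a) ∧ (id ∈ S) ∧
    ∀ a ∈ S, ∃ b ∈ S, a ∘ b = id ∧ b ∘ a = id

/-- `S` is a regular semigroup of transformations: every `a ∈ S` has `b ∈ S`
with `aba = a` (composed left to right, i.e. `x ↦ a (b (a x))`). -/
def IsRegularOn {A : Type*} (S : Set (A → A)) : Prop :=
  ∀ a ∈ S, ∃ b ∈ S, a ∘ b ∘ a = a

/-- `S` is an inverse semigroup of transformations. -/
def IsInverseOn {A : Type*} (S : Set (A → A)) : Prop :=
  ∀ a ∈ S, ∃! b, b ∈ S ∧ a ∘ b ∘ a = a ∧ b ∘ a ∘ b = b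

/-- `u` is a unit of the transformation monoid `S`. -/
def IsUnitOn {A : Type*} (S : Set (A → A)) (u : A → A) : Prop :=
  u ∈ S ∧ ∃ v ∈ S, u ∘ v = id ∧ v ∘ u = id

/-- `a` is a unit-regular element of `S`. -/
def UnitRegularElem {A : Type*} (S : Set (A → A)) (a : A → A) : Prop :=
  ∃ u, IsUnitOn S u ∧ a ∘ u ∘ a = a

/-- `S` is a unit-regular transformation monoid. -/
def IsUnitRegularOn {A : Type*} (S : Set (A → A)) : Prop :=
  ∀ a ∈ S, UnitRegularElem S a

/-- `T` is a transversal of `ker f`: it contains exactly one element of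
each kernel class. -/
def IsTransversalOf {A : Type*} (f : A → A) (T : Set A) : Prop :=
  ∀ x : A, ∃! t, t ∈ T ∧ f t = f x

/-- `T'` is a transversal of the kernel of the restriction of `f` to `Y`,
viewed inside the ambient set. -/
def IsTransversalOfOn {A : Type*} (f : A → A) (Y T' : Set A) : Prop :=
  T' ⊆ Y ∧ ∀ y ∈ Y, ∃! t, t ∈ T' ∧ f t = f y

/-- The semigroup `T_{S(Y)}(X)` of all transformations of `X` that leave `Y`
invariant and whose restriction-corestriction to `Y` lies in `S`. -/
def TSemi {X : Type*} (Y : Set X) (S : Set (Y → Y)) : Set (X → X) :=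
  {f | ∃ h : MapsTo f Y Y, MapsTo.restrict f Y Y h ∈ S}

theorem stmt1 {X : Type*} (Y : Set X) (S : Set (Y → Y)) (hY : Y.Nonempty)
    (hgrp : IsSubgroupOfSym S) :
    IsRegularOn (TSemi Y S) := by
  classical
  obtain ⟨y0, hy0⟩ := hY
  obtain ⟨_, _, _, hinv⟩ := hgrp
  rintro f ⟨hmap, hmem⟩
  obtain ⟨r, hrS, har, hra⟩ := hinv _ hmem
  set g : X → X := fun z =>
    if hz : z ∈ Y then (r ⟨z, hz⟩ : X)
    else if hz2 : ∃ x, f x = z then Classical.choose hz2 else y0 with hg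
  have hgmap : MapsTo g Y Y := by
    intro z hz
    simp only [hg, hz, dif_pos]
    exact (r ⟨z, hz⟩).2
  refine ⟨g, ⟨hgmap, ?_⟩, ?_⟩
  · have : MapsTo.restrict g Y Y hgmap = r := by
      funext y
      apply Subtype.ext
      simp only [MapsTo.restrict, Subtype.map, hg, y.2, dif_pos]
    rw [this]; exact hrS
  · funext x
    simp only [Function.comp_apply]
    by_cases h : f x ∈ Y
    · have hgfx : g (f x) = (r ⟨f x, h⟩ : X) := by simp only [hg, h, dif_pos]
      rw [hgfx]
      have : f ((r ⟨f x, h⟩ : Y) : X) = ((MapsTo.restrict f Y Y hmap (r ⟨f x, h⟩)) : X) := rfl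
      rw [this]
      have := congrFun har (⟨f x, h⟩ : Y)
      simp only [Function.comp_apply, id] at this
      rw [this]
    · have hz2 : ∃ x', f x' = f x := ⟨x, rfl⟩
      have hgfx : g (f x) = Classical.choose hz2 := by
        simp only [hg, h, dif_neg, not_false_iff, dif_pos hz2]
      rw [hgfx, Classical.choose_spec hz2]
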